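/- arXiv:2001.10087 — 4 statements merged into one kernel-verified Lean document; each statement's English description precedes it below -/
import Mathlib

section
/- In the gadget instance, for every matching M the following holds: if M(a) = {r2}, M(b) = {r1, r3}, and |M(w) ∩ U| = q_w for every w ∈ W, then no pair {u, w} with u ∈ {r1, r2, r3} and w ∈ {a, b}, and no pair {r2, w} with w ∈ W, is a blocking pair of M. -/
open scoped Classical

noncomputable section

/-- An SMTI-Diverse instance: students `S`, colleges `C`, types `T`.
Preferences are encoded by rank functions (smaller rank = more preferred);
ties are allowed.  `acc` is the (symmetric) acceptability relation, `tau`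
the 0/1 type vectors (encoded as `Bool`), `lq`/`uq` the lower/upper quota
vectors and `cap` the capacities. -/
structure SMTI (S C T : Type) [Fintype S] [Fintype C] [Fintype T] where
  acc : S → C → Prop
  tau : S → T → Bool
  rankS : S → C → ℕ
  rankC : C → S → ℕ
  lq : C → T → ℕ
  uq : C → T → ℕ
  cap : C → ℕ

namespace SMTI

variable {S C T : Type} [Fintype S] [Fintype C] [Fintype T]

/-- `f : S → Option C` encodes a matching: every assigned college is acceptable. -/
def IsMatching (I : SMTI S C T) (f : S → Option C) : Prop :=
  ∀ u w, f u = some w → I.acc u w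

/-- The set `M(w)` of students assigned to college `w`. -/
def assigned (I : SMTI S C T) (f : S → Option C) (w : C) : Finset S :=
  Finset.univ.filter fun u => f u = some w

/-- The number of students of type `z` assigned to `w`. -/
def typeLoad (I : SMTI S C T) (f : S → Option C) (w : C) (z : T) : ℕ :=
  ∑ u ∈ I.assigned f w, (I.tau u z).toNat

/-- Feasibility: capacities respected and quotas met at all colleges. -/
def Feasible (I : SMTI S C T) (f : S → Option C) : Prop :=
  ∀ w, (I.assigned f w).card ≤ I.cap w ∧
    ∀ z, I.lq w z ≤ I.typeLoad f w z ∧ I.typeLoad f w z ≤ I.uq w z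

/-- `u` strictly prefers `w` to its assigned college (in particular if unmatched). -/
def PrefersTo (I : SMTI S C T) (f : S → Option C) (u : S) (w : C) : Prop :=
  ∀ w', f u = some w' → I.rankS u w < I.rankS u w'

/-- `{u,w}` is a blocking pair of `f` witnessed by `U' ⊆ M(w)`. -/
def BlocksWith (I : SMTI S C T) (f : S → Option C) (u : S) (w : C) (U' : Finset S) : Prop :=
  f u ≠ some w ∧ I.acc u w ∧ I.PrefersTo f u w ∧
  U' ⊆ I.assigned f w ∧
  (∀ u' ∈ U', I.rankC w u < I.rankC w u') ∧
  (I.assigned f w \ U').card + 1 ≤ I.cap w ∧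
  ∀ z, I.lq w z ≤ (I.tau u z).toNat + ∑ u' ∈ I.assigned f w \ U', (I.tau u' z).toNat ∧
    (I.tau u z).toNat + ∑ u' ∈ I.assigned f w \ U', (I.tau u' z).toNat ≤ I.uq w z

/-- `{u,w}` is a blocking pair of `f` (with some witness). -/
def BlockingPair (I : SMTI S C T) (f : S → Option C) (u : S) (w : C) : Prop :=
  ∃ U', I.BlocksWith f u w U'

/-- Stability: no blocking pair at all. -/
def Stable (I : SMTI S C T) (f : S → Option C) : Prop :=
  ∀ u w, ¬ I.BlockingPair f u w

end SMTI

section Gadget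

/-- Students of the gadget: the students of `U` plus `r1, r2, r3`. -/
abbrev GSt (U : Type) := U ⊕ Fin 3
/-- Colleges of the gadget: the colleges of `W` plus `a, b`. -/
abbrev GCo (W : Type) := W ⊕ Fin 2

variable {U W : Type} [Fintype U] [Fintype W]

def gr1 : GSt U := Sum.inr 0
def gr2 : GSt U := Sum.inr 1
def gr3 : GSt U := Sum.inr 2
def ga : GCo W := Sum.inr 0
def gb : GCo W := Sum.inr 1

/-- The hypotheses describing the gadget instance of Lemma 1 (two types;
`τ_u = 00` for `u ∈ U`, `τ_{r1} = 10`, `τ_{r2} = 11`, `τ_{r3} = 01`; all lower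
quotas zero; strict preferences `r1 : b ≻ a`, `r2 : b ≻ [W] ≻ a`, `r3 : a ≻ b`;
every `w ∈ W` ranks its acceptable `U`-students (in an arbitrary fixed strict
order) before `r2` and has upper quotas `(1,1)` and capacity `q_w`;
`a : r1 ≻ r2 ≻ r3` with upper quotas `(1,1)` and capacity `1`;
`b : r3 ≻ r2 ≻ r1` with upper quotas `(1,1)` and capacity `2`). -/
structure GadgetHyps (I : SMTI (GSt U) (GCo W) (Fin 2)) : Prop where
  tauU : ∀ (u : U) (z : Fin 2), I.tau (Sum.inl u) z = false
  tauR1 : I.tau gr1 0 = true ∧ I.tau gr1 1 = false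
  tauR2 : I.tau gr2 0 = true ∧ I.tau gr2 1 = true
  tauR3 : I.tau gr3 0 = false ∧ I.tau gr3 1 = true
  lqZero : ∀ c z, I.lq c z = 0
  accR1 : ∀ c, I.acc gr1 c ↔ (c = ga ∨ c = gb)
  accR2 : ∀ c, I.acc gr2 c
  accR3 : ∀ c, I.acc gr3 c ↔ (c = ga ∨ c = gb)
  accU : ∀ (u : U) (c : GCo W), I.acc (Sum.inl u) c → ∃ w : W, c = Sum.inl w
  rkR1 : I.rankS gr1 gb < I.rankS gr1 ga
  rkR2 : ∀ w : W, I.rankS gr2 gb < I.rankS gr2 (Sum.inl w) ∧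
      I.rankS gr2 (Sum.inl w) < I.rankS gr2 ga
  rkR3 : I.rankS gr3 ga < I.rankS gr3 gb
  strictS : ∀ (s : GSt U) (c c' : GCo W), I.acc s c → I.acc s c' →
      I.rankS s c = I.rankS s c' → c = c'
  strictC : ∀ (c : GCo W) (s s' : GSt U), I.acc s c → I.acc s' c →
      I.rankC c s = I.rankC c s' → s = s'
  rkW : ∀ (w : W) (u : U), I.acc (Sum.inl u) (Sum.inl w) →
      I.rankC (Sum.inl w) (Sum.inl u) < I.rankC (Sum.inl w) gr2
  rkA : I.rankC ga gr1 < I.rankC ga gr2 ∧ I.rankC ga gr2 < I.rankC ga gr3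
  rkB : I.rankC gb gr3 < I.rankC gb gr2 ∧ I.rankC gb gr2 < I.rankC gb gr1
  uqW : ∀ (w : W) (z : Fin 2), I.uq (Sum.inl w) z = 1
  uqA : ∀ z, I.uq ga z = 1
  uqB : ∀ z, I.uq gb z = 1
  capA : I.cap ga = 1
  capB : I.cap gb = 2

end Gadget

/-- Lemma 1(1).  In the gadget instance: if `M(a) = {r2}`,
`M(b) = {r1, r3}` and `|M(w) ∩ U| = q_w` for all `w ∈ W`, then no pair `{u,w}`
with `u ∈ {r1,r2,r3}` and `w ∈ {a,b}`, and no pair `{r2, w}` with `w ∈ W`,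
is a blocking pair of `M`. -/
theorem stmt0 {U W : Type} [Fintype U] [Fintype W]
    (I : SMTI (GSt U) (GCo W) (Fin 2)) (h : GadgetHyps I)
    (f : GSt U → Option (GCo W)) (hM : I.IsMatching f)
    (ha : I.assigned f ga = {gr2})
    (hb : I.assigned f gb = {gr1, gr3})
    (hfull : ∀ w : W,
      ((I.assigned f (Sum.inl w)).filter fun st => ∃ u : U, st = Sum.inl u).card
        = I.cap (Sum.inl w)) :
    (∀ (i : Fin 3) (c : Fin 2),
        ¬ I.BlockingPair f (Sum.inr i : GSt U) (Sum.inr c : GCo W)) ∧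
    (∀ w : W, ¬ I.BlockingPair f gr2 (Sum.inl w)) := by
  have instEq : (fun (a b : GSt U) => Classical.propDecidable (a = b))
      = (inferInstance : DecidableEq (GSt U)) := Subsingleton.elim _ _
  have hfa2 : f gr2 = some ga := by
    have h2 : gr2 ∈ I.assigned f ga := by rw [ha]; exact Finset.mem_singleton_self _
    simpa [SMTI.assigned] using h2
  have hfb1 : f gr1 = some gb := by
    have h1 : gr1 ∈ I.assigned f gb := by rw [hb]; exact Finset.mem_insert_self _ _
    simpa [SMTI.assigned] using h1
  have hfb3 : f gr3 = some gb := by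
    have h3 : gr3 ∈ I.assigned f gb := by
      rw [hb]; exact Finset.mem_insert_of_mem (Finset.mem_singleton_self _)
    simpa [SMTI.assigned] using h3
  constructor
  · intro i c
    fin_cases i <;> fin_cases c
    · -- r1, a
      show ¬ I.BlockingPair f gr1 ga
      rintro ⟨U', hne, hacc, hpref, -⟩
      have h1 := hpref gb hfb1
      have h2 := h.rkR1
      omega
    · -- r1, b
      show ¬ I.BlockingPair f gr1 gb
      rintro ⟨U', hne, -⟩
      exact hne hfb1
    · -- r2, a
      show ¬ I.BlockingPair f gr2 ga
      rintro ⟨U', hne, -⟩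
      exact hne hfa2
    · -- r2, b
      show ¬ I.BlockingPair f gr2 gb
      rintro ⟨U', hne, hacc, hpref, hsub, hrank, hcap, hq⟩
      rw [instEq] at hcap hq
      have h3notin : gr3 ∉ U' := by
        intro hmem
        have h1 := hrank gr3 hmem
        have h2 := h.rkB.1
        omega
      have h3in : gr3 ∈ I.assigned f gb \ U' := by
        refine Finset.mem_sdiff.2 ⟨?_, h3notin⟩
        rw [hb]; exact Finset.mem_insert_of_mem (Finset.mem_singleton_self _)
      have hsum : 1 ≤ ∑ u' ∈ I.assigned f gb \ U', (I.tau u' 1).toNat := by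
        have h1 := Finset.single_le_sum (f := fun u' => (I.tau u' 1).toNat)
          (fun _ _ => Nat.zero_le _) h3in
        simpa [h.tauR3.2] using h1
      have hq1 := (hq 1).2
      rw [h.uqB 1, h.tauR2.2] at hq1
      simp only [Bool.toNat_true] at hq1
      omega
    · -- r3, a
      show ¬ I.BlockingPair f gr3 ga
      rintro ⟨U', hne, hacc, hpref, hsub, hrank, hcap, hq⟩
      rw [instEq] at hcap
      rw [h.capA] at hcap
      have h2in : gr2 ∈ U' := by
        by_contra hc
        have hmem : gr2 ∈ I.assigned f ga \ U' := by
          refine Finset.mem_sdiff.2 ⟨?_, hc⟩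
          rw [ha]; exact Finset.mem_singleton_self _
        have := Finset.card_pos.2 ⟨gr2, hmem⟩
        omega
      have h1 := hrank gr2 h2in
      have h2 := h.rkA.2
      omega
    · -- r3, b
      show ¬ I.BlockingPair f gr3 gb
      rintro ⟨U', hne, -⟩
      exact hne hfb3
  · intro w
    rintro ⟨U', hne, hacc, hpref, hsub, hrank, hcap, hq⟩
    rw [instEq] at hcap
    have honlyU : ∀ st ∈ I.assigned f (Sum.inl w), ∃ u : U, st = Sum.inl u := by
      intro st hst
      have hst' : f st = some (Sum.inl w) := by
        simpa [SMTI.assigned] using hst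
      rcases st with u | i
      · exact ⟨u, rfl⟩
      · exfalso
        fin_cases i
        · have h1 : f gr1 = some (Sum.inl w) := hst'
          rw [hfb1] at h1
          simp [gb] at h1
        · have h1 : f gr2 = some (Sum.inl w) := hst'
          rw [hfa2] at h1
          simp [ga] at h1
        · have h1 : f gr3 = some (Sum.inl w) := hst'
          rw [hfb3] at h1
          simp [gb] at h1
    have hcardw : (I.assigned f (Sum.inl w)).card = I.cap (Sum.inl w) := by
      rw [← hfull w]
      congr 1
      rw [Finset.filter_true_of_mem honlyU]
    have hU'empty : U' = ∅ := by
      rw [Finset.eq_empty_iff_forall_notMem]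
      intro u' hu'
      obtain ⟨u, rfl⟩ := honlyU u' (hsub hu')
      have haccu : I.acc (Sum.inl u) (Sum.inl w) := by
        apply hM
        have h1 := hsub hu'
        simpa [SMTI.assigned] using h1
      have h1 := h.rkW w u haccu
      have h2 := hrank _ hu'
      omega
    subst hU'empty
    rw [Finset.sdiff_empty, hcardw] at hcap
    omega
end
end

section
/- In the RX3C construction, the feasible matching M that assigns every set-student to w and leaves d unmatched admits a blocking pair if and only if S contains an exact cover of X. -/
open scoped Classical

noncomputable section

section RX3C

variable {X : Type} [Fintype X]

/-- Students of the RX3C construction: one set-student per member of `SS`,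
plus the special student `d` (`Sum.inr ()`). -/
abbrev RSt (SS : Finset (Finset X)) := {A : Finset X // A ∈ SS} ⊕ Unit

/-- The hypotheses describing the RX3C construction: a single college (`Unit`)
acceptable to everybody, types identified with `X`, `τ_{s_S}[x] = 1` iff `x ∈ S`,
`τ_d ≡ 1`, the college ranks `d` first followed by the set-students in an arbitrary
fixed strict order, `ℓ_w[x] = u_w[x] = 3` for all `x`, and `q_w = |SS|`. -/
structure RX3CHyps (SS : Finset (Finset X)) (I : SMTI (RSt SS) Unit X) : Prop where
  accAll : ∀ st : RSt SS, I.acc st ()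
  tauSet : ∀ (A : {A : Finset X // A ∈ SS}) (x : X),
      I.tau (Sum.inl A) x = true ↔ x ∈ A.1
  tauD : ∀ x : X, I.tau (Sum.inr ()) x = true
  rkDFirst : ∀ A : {A : Finset X // A ∈ SS},
      I.rankC () (Sum.inr ()) < I.rankC () (Sum.inl A)
  rkStrict : ∀ s s' : RSt SS, I.rankC () s = I.rankC () s' → s = s'
  lq3 : ∀ x : X, I.lq () x = 3
  uq3 : ∀ x : X, I.uq () x = 3
  capAll : I.cap () = SS.card

end RX3C

/-- Given an RX3C instance (`|X| = 3q`, every `A ∈ SS` has three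
elements, every element of `X` lies in exactly three members of `SS`), the feasible
matching assigning all set-students to the single college and leaving `d` unmatched
admits a blocking pair iff `SS` contains an exact cover of `X`. -/
theorem stmt2 {X : Type} [Fintype X] (q : ℕ) (hq : 1 ≤ q)
    (hX : Fintype.card X = 3 * q)
    (SS : Finset (Finset X))
    (h3 : ∀ A ∈ SS, A.card = 3)
    (hocc : ∀ x : X, (SS.filter fun A => x ∈ A).card = 3)
    (I : SMTI (RSt SS) Unit X) (hI : RX3CHyps SS I)
    (f : RSt SS → Option Unit)
    (hfSet : ∀ A : {A : Finset X // A ∈ SS}, f (Sum.inl A) = some ())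
    (hfD : f (Sum.inr ()) = none) :
    (∃ (u : RSt SS) (w : Unit), I.BlockingPair f u w) ↔
      ∃ Cov ⊆ SS, ∀ x : X, (Cov.filter fun A => x ∈ A).card = 1 := by
  letI : DecidableEq (RSt SS) := fun a b => Classical.propDecidable (a = b)
  -- the assigned set of the unique college is exactly the set-students
  have hass : I.assigned f () = SS.attach.map ⟨Sum.inl, Sum.inl_injective⟩ := by
    ext s
    simp only [SMTI.assigned, Finset.mem_filter, Finset.mem_univ, true_and, Finset.mem_map,
      Function.Embedding.coeFn_mk]
    cases s with
    | inl A =>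
        simp only [hfSet A, true_iff]
        exact ⟨A, Finset.mem_attach _ _, rfl⟩
    | inr u =>
        cases u
        simp [hfD]
  have htau : ∀ (a : {A : Finset X // A ∈ SS}) (z : X),
      (I.tau (Sum.inl a) z).toNat = if z ∈ a.1 then 1 else 0 := by
    intro a z
    by_cases h : z ∈ a.1
    · simp [h, (hI.tauSet a z).2 h]
    · have hf : I.tau (Sum.inl a) z = false := by
        cases hh : I.tau (Sum.inl a) z
        · rfl
        · exact absurd ((hI.tauSet a z).1 hh) h
      simp [h, hf]
  have htot : ∀ z : X, ∑ s ∈ I.assigned f (), (I.tau s z).toNat = 3 := by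
    intro z
    rw [hass, Finset.sum_map]
    simp only [Function.Embedding.coeFn_mk]
    rw [Finset.sum_congr rfl (fun a _ => htau a z),
      Finset.sum_attach SS (fun A => if z ∈ A then 1 else 0), ← Finset.card_filter]
    exact hocc z
  constructor
  · rintro ⟨u, w, U', h1, h2, h3p, hsub, hrk, hcap, hquo⟩
    cases w
    -- u must be the special student d
    obtain rfl : u = Sum.inr () := by
      cases u with
      | inl A => exact absurd (hfSet A) h1
      | inr v => cases v; rfl
    have hdz : ∀ z : X, (I.tau (Sum.inr ()) z).toNat = 1 := by
      intro z; simp [hI.tauD z]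
    -- the witness removes exactly one set containing each element
    have hU1 : ∀ z : X, ∑ s ∈ U', (I.tau s z).toNat = 1 := by
      intro z
      have h := hquo z
      rw [hI.lq3, hI.uq3, hdz z] at h
      have hsd : ∑ s ∈ I.assigned f () \ U', (I.tau s z).toNat +
          ∑ s ∈ U', (I.tau s z).toNat = 3 := by
        rw [Finset.sum_sdiff hsub]; exact htot z
      have h' : 3 ≤ 1 + ∑ s ∈ I.assigned f () \ U', (I.tau s z).toNat ∧
          1 + ∑ s ∈ I.assigned f () \ U', (I.tau s z).toNat ≤ 3 := h
      omega
    have hmem : ∀ s ∈ U', ∃ a : {A : Finset X // A ∈ SS}, s = Sum.inl a := by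
      intro s hs
      have := hsub hs
      rw [hass, Finset.mem_map] at this
      obtain ⟨a, _, rfl⟩ := this
      exact ⟨a, rfl⟩
    set g : RSt SS → Finset X := Sum.elim Subtype.val (fun _ => ∅) with hg
    refine ⟨U'.image g, ?_, ?_⟩
    · intro B hB
      rw [Finset.mem_image] at hB
      obtain ⟨s, hs, rfl⟩ := hB
      obtain ⟨a, rfl⟩ := hmem s hs
      exact a.2
    · intro z
      have hinj : Set.InjOn g ↑U' := by
        intro s hs s' hs' hgs
        obtain ⟨a, rfl⟩ := hmem s hs
        obtain ⟨a', rfl⟩ := hmem s' hs'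
        simp only [hg, Sum.elim_inl] at hgs
        exact congrArg Sum.inl (Subtype.ext hgs)
      rw [Finset.card_filter, Finset.sum_image (fun s hs s' hs' => hinj hs hs')]
      rw [Finset.sum_congr rfl ?_]
      · exact hU1 z
      · intro s hs
        obtain ⟨a, rfl⟩ := hmem s hs
        simp only [hg, Sum.elim_inl]
        exact (htau a z).symm
  · rintro ⟨Cov, hCsub, hCcov⟩
    have einj : Function.Injective
        (fun a : {A : Finset X // A ∈ Cov} => (Sum.inl ⟨a.1, hCsub a.2⟩ : RSt SS)) := by
      intro a a' h
      simp only [Sum.inl.injEq, Subtype.mk.injEq] at h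
      exact Subtype.ext h
    set U' : Finset (RSt SS) := Cov.attach.map ⟨_, einj⟩ with hU'
    have hsubU' : U' ⊆ I.assigned f () := by
      intro s hs
      rw [hU', Finset.mem_map] at hs
      obtain ⟨a, _, rfl⟩ := hs
      simp [SMTI.assigned, hfSet]
    have hU'card : U'.card = Cov.card := by
      rw [hU', Finset.card_map, Finset.card_attach]
    have hAcard : (I.assigned f ()).card = SS.card := by
      rw [hass, Finset.card_map, Finset.card_attach]
    have hCovpos : 1 ≤ Cov.card := by
      have hx : 0 < Fintype.card X := by omega
      obtain ⟨x⟩ := Fintype.card_pos_iff.mp hx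
      calc 1 = (Cov.filter fun A => x ∈ A).card := (hCcov x).symm
        _ ≤ Cov.card := Finset.card_le_card (Finset.filter_subset _ _)
    have hCS : Cov.card ≤ SS.card := Finset.card_le_card hCsub
    have hU'sum : ∀ z : X, ∑ s ∈ U', (I.tau s z).toNat = 1 := by
      intro z
      rw [hU', Finset.sum_map]
      simp only [Function.Embedding.coeFn_mk]
      rw [Finset.sum_congr rfl (fun a _ => htau ⟨a.1, hCsub a.2⟩ z),
        Finset.sum_attach Cov (fun A => if z ∈ A then 1 else 0), ← Finset.card_filter]
      exact hCcov z
    refine ⟨Sum.inr (), (), U', ?_, hI.accAll _, ?_, hsubU', ?_, ?_, ?_⟩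
    · simp [hfD]
    · intro w' h
      rw [hfD] at h
      exact absurd h (by simp)
    · intro u' hu'
      rw [hU', Finset.mem_map] at hu'
      obtain ⟨a, _, rfl⟩ := hu'
      exact hI.rkDFirst _
    · have hcs : (I.assigned f () \ U').card + U'.card = (I.assigned f ()).card :=
        Finset.card_sdiff_add_card_eq_card hsubU'
      show (I.assigned f () \ U').card + 1 ≤ I.cap ()
      rw [hI.capAll]
      omega
    · intro z
      show I.lq () z ≤ (I.tau (Sum.inr ()) z).toNat +
            ∑ u' ∈ I.assigned f () \ U', (I.tau u' z).toNat ∧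
          (I.tau (Sum.inr ()) z).toNat +
            ∑ u' ∈ I.assigned f () \ U', (I.tau u' z).toNat ≤ I.uq () z
      rw [hI.lq3, hI.uq3]
      have hd : (I.tau (Sum.inr ()) z).toNat = 1 := by simp [hI.tauD z]
      have hsd : ∑ s ∈ I.assigned f () \ U', (I.tau s z).toNat +
          ∑ s ∈ U', (I.tau s z).toNat = 3 := by
        rw [Finset.sum_sdiff hsubU']; exact htot z
      have := hU'sum z
      omega
end
end

section
/- Let φ be a Boolean formula in 3CNF over two disjoint variable sets X* and Y* with clauses C*_1,…,C*_s, where clause C*_j has literals lit_j^1, lit_j^2, lit_j^3. For each j introduce four fresh variables a_j, b_j, c_j, d_j and the clauses C_j^1 = (¬lit_j^1, a_j, b_j), C_j^2 = (lit_j^2, b_j, c_j), C_j^3 = (¬lit_j^3, c_j, d_j), where ¬lit denotes the complementary literal. Then the following are equivalent: (i) for every truth assignment of X* there exists a truth assignment of Y* under which every clause C*_j is satisfied; (ii) for every truth assignment of X* there exists a truth assignment of Y* ∪ {a_j, b_j, c_j, d_j : j ∈ [s]} under which every clause C_j^z (j ∈ [s], z ∈ [3]) is 1-in-3-satisfied.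 -/
/-- A literal over the variable set `V`: a polarity (`true` = positive) together
with a variable. -/
abbrev Lit (V : Type) := Bool × V

/-- The truth value of a literal under an assignment. -/
def evalLit {V : Type} (σ : V → Bool) (l : Lit V) : Bool :=
  if l.1 then σ l.2 else !(σ l.2)

/-- A triple of Boolean values is 1-in-3-satisfied if exactly one entry is true. -/
def OneInThree (x y z : Bool) : Prop := x.toNat + y.toNat + z.toNat = 1

lemma gadget (x y z : Bool) :
    (x = true ∨ y = true ∨ z = true) ↔
    ∃ a b c d : Bool, OneInThree (!x) a b ∧ OneInThree y b c ∧ OneInThree (!z) c d := by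
  unfold OneInThree
  constructor
  · intro h
    cases x <;> cases y <;> cases z <;> simp_all <;>
      exact ⟨by decide⟩
  · rintro ⟨a, b, c, d, h1, h2, h3⟩
    cases x <;> cases y <;> cases z <;> cases a <;> cases b <;> cases c <;> cases d <;>
      simp_all

/-- Let `φ` be a 3CNF formula over disjoint variable sets `X`
and `Y` with clauses `cl j = (lit_j^1, lit_j^2, lit_j^3)` (`j ∈ Fin s`).  For each
`j` introduce four fresh variables `a_j = (j,0), b_j = (j,1), c_j = (j,2),
d_j = (j,3)` and the clauses `(¬lit_j^1, a_j, b_j)`, `(lit_j^2, b_j, c_j)`,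
`(¬lit_j^3, c_j, d_j)`.  Then: for every assignment of `X` there is an assignment
of `Y` satisfying all clauses of `φ` iff for every assignment of `X` there is an
assignment of `Y` and the fresh variables 1-in-3-satisfying all new clauses. -/
theorem stmt5 (X Y : Type) (s : ℕ) (cl : Fin s → Fin 3 → Lit (X ⊕ Y)) :
    (∀ σX : X → Bool, ∃ σY : Y → Bool, ∀ j : Fin s,
        ∃ z : Fin 3, evalLit (Sum.elim σX σY) (cl j z) = true) ↔
    (∀ σX : X → Bool, ∃ (σY : Y → Bool) (σZ : Fin s × Fin 4 → Bool), ∀ j : Fin s,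
        OneInThree (!(evalLit (Sum.elim σX σY) (cl j 0))) (σZ (j, 0)) (σZ (j, 1)) ∧
        OneInThree (evalLit (Sum.elim σX σY) (cl j 1)) (σZ (j, 1)) (σZ (j, 2)) ∧
        OneInThree (!(evalLit (Sum.elim σX σY) (cl j 2))) (σZ (j, 2)) (σZ (j, 3))) := by
  constructor
  · intro h σX
    obtain ⟨σY, hσY⟩ := h σX
    refine ⟨σY, ?_⟩
    have key : ∀ j : Fin s, ∃ abcd : Fin 4 → Bool,
        OneInThree (!(evalLit (Sum.elim σX σY) (cl j 0))) (abcd 0) (abcd 1) ∧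
        OneInThree (evalLit (Sum.elim σX σY) (cl j 1)) (abcd 1) (abcd 2) ∧
        OneInThree (!(evalLit (Sum.elim σX σY) (cl j 2))) (abcd 2) (abcd 3) := by
      intro j
      have hj := hσY j
      have : evalLit (Sum.elim σX σY) (cl j 0) = true ∨
          evalLit (Sum.elim σX σY) (cl j 1) = true ∨
          evalLit (Sum.elim σX σY) (cl j 2) = true := by
        obtain ⟨z, hz⟩ := hj
        fin_cases z <;> simp_all <;> tauto
      obtain ⟨a, b, c, d, h1, h2, h3⟩ := (gadget _ _ _).mp this
      exact ⟨![a, b, c, d], h1, h2, h3⟩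
    choose f hf using key
    exact ⟨fun p => f p.1 p.2, fun j => hf j⟩
  · intro h σX
    obtain ⟨σY, σZ, hσ⟩ := h σX
    refine ⟨σY, fun j => ?_⟩
    obtain ⟨h1, h2, h3⟩ := hσ j
    have : evalLit (Sum.elim σX σY) (cl j 0) = true ∨
        evalLit (Sum.elim σX σY) (cl j 1) = true ∨
        evalLit (Sum.elim σX σY) (cl j 2) = true :=
      (gadget _ _ _).mpr ⟨_, _, _, _, h1, h2, h3⟩
    rcases this with h | h | h
    exacts [⟨0, h⟩, ⟨1, h⟩, ⟨2, h⟩]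
end

section
/- Let M be a feasible matching in an SMTI-Diverse instance, and let {u,w} ∉ M with u ∈ A(w) and u strictly preferring w to M(u). Then {u,w} is a blocking pair of M if and only if there exists a subset U' ⊆ M(w) such that: (i) no two students of U' have the same type vector; (ii) every u' ∈ U' belongs to worst(M, w, τ_{u'}); (iii) w strictly prefers u to every student of U'; and (iv) |M(w)∖U'| + 1 ≤ q_w and ℓ_w ≤ τ_u + Σ_{u''∈M(w)∖U'} τ_{u''} ≤ u_w componentwise. -/
open scoped Classical

noncomputable section

namespace SMTI

variable {S C T : Type} [Fintype S] [Fintype C] [Fintype T]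

/-- `S(M,w,τ)`: the students assigned to `w` whose type vector equals `tv`. -/
def sset (I : SMTI S C T) (f : S → Option C) (w : C) (tv : T → Bool) : Finset S :=
  (I.assigned f w).filter fun u => ∀ z, I.tau u z = tv z

/-- `worst(M,w,τ)`: the least preferred (by `w`) students in `S(M,w,τ)`. -/
def worst (I : SMTI S C T) (f : S → Option C) (w : C) (tv : T → Bool) : Finset S :=
  (I.sset f w tv).filter fun u => ∀ u' ∈ I.sset f w tv, I.rankC w u' ≤ I.rankC w u

lemma removeDup (I : SMTI S C T) (f : S → Option C) (hfeas : I.Feasible f)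
    {u : S} {w : C} {U' : Finset S} (hB : I.BlocksWith f u w U')
    {u1 u2 : S} (hm1 : u1 ∈ U') (hm2 : u2 ∈ U') (hne : u1 ≠ u2)
    (hsame : ∀ z, I.tau u1 z = I.tau u2 z) :
    I.BlocksWith f u w (U'.erase u2) := by
  obtain ⟨hnm, hacc, hpref, hsub, hrank, hcard, hq⟩ := hB
  have hA2 : u2 ∈ I.assigned f w := hsub hm2
  have hset : I.assigned f w \ U'.erase u2 = insert u2 (I.assigned f w \ U') := by
    ext a
    simp only [Finset.mem_sdiff, Finset.mem_erase, Finset.mem_insert]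
    by_cases ha : a = u2
    · subst ha; simp [hA2]
    · constructor
      · rintro ⟨haA, hn⟩; exact Or.inr ⟨haA, fun hU => hn ⟨ha, hU⟩⟩
      · rintro (rfl | ⟨haA, hn⟩); · exact absurd rfl ha
        exact ⟨haA, fun h' => hn h'.2⟩
  have hnotmem : u2 ∉ I.assigned f w \ U' := by simp [Finset.mem_sdiff, hm2]
  have hsum : ∀ z, ∑ u' ∈ I.assigned f w \ U'.erase u2, (I.tau u' z).toNat
      = (I.tau u2 z).toNat + ∑ u' ∈ I.assigned f w \ U', (I.tau u' z).toNat := by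
    intro z; rw [hset, Finset.sum_insert hnotmem]
  have hcard' : (I.assigned f w \ U'.erase u2).card
      = (I.assigned f w \ U').card + 1 := by
    rw [hset, Finset.card_insert_of_notMem hnotmem]
  have hUcard : 2 ≤ U'.card := by
    have : ({u1, u2} : Finset S) ⊆ U' := by
      intro a ha; simp at ha; rcases ha with rfl | rfl <;> assumption
    calc 2 = ({u1, u2} : Finset S).card := (Finset.card_pair hne).symm
      _ ≤ U'.card := Finset.card_le_card this
  have hAcard : (I.assigned f w \ U').card + U'.card = (I.assigned f w).card :=
    Finset.card_sdiff_add_card_eq_card hsub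
  refine ⟨hnm, hacc, hpref, (Finset.erase_subset _ _).trans hsub,
    fun u' hu' => hrank u' (Finset.mem_of_mem_erase hu'), ?_, ?_⟩
  · have := (hfeas w).1
    omega
  · intro z
    have hlo := (hq z).1
    have hhi := (hq z).2
    rw [hsum z]
    by_cases hz : I.tau u2 z = true
    · have hz1 : I.tau u1 z = true := (hsame z).trans hz
      have hsd : ∑ u' ∈ I.assigned f w \ U', (I.tau u' z).toNat
          + ∑ u' ∈ U', (I.tau u' z).toNat = I.typeLoad f w z :=
        Finset.sum_sdiff hsub
      have h2 : 2 ≤ ∑ u' ∈ U', (I.tau u' z).toNat := by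
        have hs : ({u1, u2} : Finset S) ⊆ U' := by
          intro a ha; simp at ha; rcases ha with rfl | rfl <;> assumption
        calc 2 = ∑ u' ∈ ({u1, u2} : Finset S), (I.tau u' z).toNat := by
              simp [Finset.sum_pair hne, hz1, hz]
          _ ≤ ∑ u' ∈ U', (I.tau u' z).toNat :=
              Finset.sum_le_sum_of_subset hs
      have huq := ((hfeas w).2 z).2
      have htu : (I.tau u z).toNat ≤ 1 := by cases I.tau u z <;> simp
      rw [hz]
      simp only [Bool.toNat_true]
      omega
    · simp at hz
      rw [hz]
      simpa using ⟨hlo, hhi⟩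

lemma toDistinct (I : SMTI S C T) (f : S → Option C) (hfeas : I.Feasible f)
    {u : S} {w : C} :
    ∀ U' : Finset S, I.BlocksWith f u w U' →
      ∃ V, I.BlocksWith f u w V ∧
        ∀ u1 ∈ V, ∀ u2 ∈ V, (∀ z, I.tau u1 z = I.tau u2 z) → u1 = u2 := by
  intro U'
  induction U' using Finset.strongInduction with
  | _ U' ih =>
    intro hB
    by_cases hd : ∀ u1 ∈ U', ∀ u2 ∈ U', (∀ z, I.tau u1 z = I.tau u2 z) → u1 = u2
    · exact ⟨U', hB, hd⟩
    · push_neg at hd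
      obtain ⟨u1, h1, u2, h2, hsame, hne⟩ := hd
      exact ih (U'.erase u2) (Finset.erase_ssubset h2)
        (removeDup I f hfeas hB h1 h2 hne hsame)

end SMTI

/-- A pair `{u,w}` (unmatched, acceptable, with `u` strictly
preferring `w` to `M(u)`) blocks a feasible matching iff it has a witness consisting
of pairwise type-distinct students, each being among the least preferred students of
its type vector in `M(w)`, all strictly less preferred than `u` by `w`, such that the
exchange is feasible for `w`. -/
theorem stmt13 {S C T : Type} [Fintype S] [Fintype C] [Fintype T]
    (I : SMTI S C T) (f : S → Option C) (hM : I.IsMatching f) (hfeas : I.Feasible f)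
    (u : S) (w : C) (h1 : f u ≠ some w) (h2 : I.acc u w) (h3 : I.PrefersTo f u w) :
    I.BlockingPair f u w ↔
      ∃ U' : Finset S, U' ⊆ I.assigned f w ∧
        (∀ u1 ∈ U', ∀ u2 ∈ U', (∀ z, I.tau u1 z = I.tau u2 z) → u1 = u2) ∧
        (∀ u' ∈ U', u' ∈ I.worst f w (fun z => I.tau u' z)) ∧
        (∀ u' ∈ U', I.rankC w u < I.rankC w u') ∧
        (I.assigned f w \ U').card + 1 ≤ I.cap w ∧
        (∀ z, I.lq w z ≤ (I.tau u z).toNat + ∑ u'' ∈ I.assigned f w \ U', (I.tau u'' z).toNat ∧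
          (I.tau u z).toNat + ∑ u'' ∈ I.assigned f w \ U', (I.tau u'' z).toNat ≤ I.uq w z) := by
  constructor
  · rintro ⟨U0, hB0⟩
    obtain ⟨V, hB, hdist⟩ := I.toDistinct f hfeas U0 hB0
    obtain ⟨hnm, hacc, hpref, hsub, hrank, hcard, hq⟩ := hB
    -- replace each member of V by a worst student of the same type vector
    have hg : ∀ a : S, ∃ v, a ∈ V → v ∈ I.worst f w (fun z => I.tau a z) := by
      intro a
      by_cases ha : a ∈ V
      · have hassS : a ∈ I.sset f w (fun z => I.tau a z) := by
          simp only [SMTI.sset, Finset.mem_filter]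
          exact ⟨hsub ha, fun _ => trivial⟩
        obtain ⟨b, hb, hbmax⟩ := Finset.exists_max_image
          (I.sset f w (fun z => I.tau a z)) (I.rankC w) ⟨a, hassS⟩
        exact ⟨b, fun _ => by simp [SMTI.worst, Finset.mem_filter, hb]; tauto⟩
      · exact ⟨a, fun h => absurd h ha⟩
    choose g hgw using hg
    -- basic facts about g on V
    have hmemsset : ∀ a ∈ V, a ∈ I.sset f w (fun z => I.tau a z) := by
      intro a ha
      simp only [SMTI.sset, Finset.mem_filter]
      exact ⟨hsub ha, fun _ => trivial⟩
    have hgworst : ∀ a ∈ V, g a ∈ I.sset f w (fun z => I.tau a z) ∧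
        ∀ u' ∈ I.sset f w (fun z => I.tau a z), I.rankC w u' ≤ I.rankC w (g a) := by
      intro a ha
      have hw := hgw a ha
      simp only [SMTI.worst, Finset.mem_filter] at hw
      exact hw
    have hgsset : ∀ a ∈ V, g a ∈ I.sset f w (fun z => I.tau a z) :=
      fun a ha => (hgworst a ha).1
    have hgtau : ∀ a ∈ V, ∀ z, I.tau (g a) z = I.tau a z := by
      intro a ha
      have hs := hgsset a ha
      simp only [SMTI.sset, Finset.mem_filter] at hs
      exact hs.2
    have hgassigned : ∀ a ∈ V, g a ∈ I.assigned f w := by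
      intro a ha
      have hs := hgsset a ha
      simp only [SMTI.sset, Finset.mem_filter] at hs
      exact hs.1
    have hgrank : ∀ a ∈ V, I.rankC w a ≤ I.rankC w (g a) :=
      fun a ha => (hgworst a ha).2 a (hmemsset a ha)
    have hinj : Set.InjOn g V := by
      intro a ha b hb hab
      apply hdist a ha b hb
      intro z
      rw [← hgtau a ha z, hab, hgtau b hb z]
    set U'' := V.image g with hU''
    have hsubU'' : U'' ⊆ I.assigned f w := by
      intro x hx
      simp [hU''] at hx
      obtain ⟨a, ha, rfl⟩ := hx
      exact hgassigned a ha
    have hsumeq : ∀ z, ∑ x ∈ U'', (I.tau x z).toNat = ∑ a ∈ V, (I.tau a z).toNat := by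
      intro z
      rw [hU'', Finset.sum_image (fun a ha b hb h => hinj ha hb h)]
      exact Finset.sum_congr rfl fun a ha => by rw [hgtau a ha z]
    have hcardeq : U''.card = V.card := Finset.card_image_of_injOn hinj
    have hsdcard : (I.assigned f w \ U'').card = (I.assigned f w \ V).card := by
      rw [Finset.card_sdiff_of_subset hsubU'', Finset.card_sdiff_of_subset hsub, hcardeq]
    have hsdsum : ∀ z, ∑ x ∈ I.assigned f w \ U'', (I.tau x z).toNat
        = ∑ x ∈ I.assigned f w \ V, (I.tau x z).toNat := by
      intro z
      have h1' : ∑ x ∈ I.assigned f w \ U'', (I.tau x z).toNat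
          + ∑ x ∈ U'', (I.tau x z).toNat = I.typeLoad f w z := Finset.sum_sdiff hsubU''
      have h2' : ∑ x ∈ I.assigned f w \ V, (I.tau x z).toNat
          + ∑ x ∈ V, (I.tau x z).toNat = I.typeLoad f w z := Finset.sum_sdiff hsub
      have := hsumeq z
      omega
    refine ⟨U'', hsubU'', ?_, ?_, ?_, ?_, ?_⟩
    · -- pairwise distinct type vectors
      intro x1 hx1 x2 hx2 htt
      simp [hU''] at hx1 hx2
      obtain ⟨a, ha, rfl⟩ := hx1
      obtain ⟨b, hb, rfl⟩ := hx2
      have : a = b := by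
        apply hdist a ha b hb
        intro z
        rw [← hgtau a ha z, htt z, hgtau b hb z]
      rw [this]
    · -- worst membership
      intro x hx
      simp [hU''] at hx
      obtain ⟨a, ha, rfl⟩ := hx
      have hwst := hgw a ha
      have : (fun z => I.tau (g a) z) = fun z => I.tau a z := funext (hgtau a ha)
      rw [this]
      exact hwst
    · -- ranks
      intro x hx
      simp [hU''] at hx
      obtain ⟨a, ha, rfl⟩ := hx
      exact lt_of_lt_of_le (hrank a ha) (hgrank a ha)
    · rw [hsdcard]
      have : (I.assigned f w \ V).card + 1 ≤ I.cap w := hcard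
      omega
    · intro z
      rw [hsdsum z]
      exact hq z
  · rintro ⟨U', hsub, _, _, hrank, hcard, hq⟩
    exact ⟨U', h1, h2, h3, hsub, hrank, hcard, hq⟩
end
end
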